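/- Under the elliptical model with E(ξ₁²) = p, the parameter ς² = Var(ξ₁²) satisfies the estimating equation ς² = p(p+2)·[Var(‖x₁‖²) − 2tr(Σ²)]/[tr(Σ)² + 2tr(Σ²)] + 2p, provided Σ ≠ 0. -/

import Mathlib

open MeasureTheory ProbabilityTheory Matrix

/-- A probability measure on vectors is the uniform distribution on the unit sphere:
it is a probability measure, concentrated on the unit sphere, and invariant under
every orthogonal transformation. -/
def IsUniformOnSphere {p : ℕ} (μ : MeasureTheory.Measure (Fin p → ℝ)) : Prop :=
  MeasureTheory.IsProbabilityMeasure μ ∧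
  (∀ᵐ x ∂μ, dotProduct x x = 1) ∧
  ∀ Q : Matrix (Fin p) (Fin p) ℝ, Q ∈ Matrix.orthogonalGroup (Fin p) ℝ →
    μ.map (fun x => Q.mulVec x) = μ

open scoped ComplexOrder in
/-- The positive semidefinite square root of a positive semidefinite matrix
(the definition `Matrix.PosSemidef.sqrt` of the older Mathlib, removed since). -/
noncomputable def Matrix.PosSemidef.sqrt {n : Type*} [Fintype n] [DecidableEq n]
    {𝕜 : Type*} [RCLike 𝕜] {A : Matrix n n 𝕜} (hA : A.PosSemidef) : Matrix n n 𝕜 :=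
  hA.1.eigenvectorUnitary.1 * diagonal ((↑) ∘ (√·) ∘ hA.1.eigenvalues) *
  (star hA.1.eigenvectorUnitary : Matrix n n 𝕜)

set_option linter.dupNamespace false
set_option maxHeartbeats 1000000


namespace EEV
variable {p : ℕ} {μ : Measure (Fin p → ℝ)}


noncomputable def invSqrt2 : ℝ := (Real.sqrt 2)⁻¹

lemma invSqrt2_sq : invSqrt2 * invSqrt2 = 1/2 := by
  rw [invSqrt2, ← mul_inv, Real.mul_self_sqrt (by norm_num)]
  norm_num

lemma measurable_mulVec (Q : Matrix (Fin p) (Fin p) ℝ) :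
    Measurable (fun v : Fin p → ℝ => Q *ᵥ v) := by
  apply measurable_pi_lambda
  intro a
  show Measurable fun v : Fin p → ℝ => ∑ k, Q a k * v k
  exact Finset.measurable_sum _ fun k _ => measurable_const.mul (measurable_pi_apply k)

/-- sign flip matrix -/
noncomputable def flipMat (j : Fin p) : Matrix (Fin p) (Fin p) ℝ :=
  Matrix.diagonal (fun k => if k = j then (-1 : ℝ) else 1)

lemma flipMat_mem (j : Fin p) : flipMat j ∈ Matrix.orthogonalGroup (Fin p) ℝ := by
  rw [Matrix.mem_unitaryGroup_iff]
  have h1 : star (flipMat j) = flipMat j := by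
    rw [Matrix.star_eq_conjTranspose]
    ext a b
    rw [Matrix.conjTranspose_apply, star_trivial]
    rcases eq_or_ne a b with h | h
    · subst h; rfl
    · simp [flipMat, Matrix.diagonal_apply, h, Ne.symm h]
  rw [h1, flipMat, Matrix.diagonal_mul_diagonal]
  ext a b
  rcases eq_or_ne a b with h | h
  · subst h
    rw [Matrix.diagonal_apply_eq, Matrix.one_apply_eq]
    by_cases h2 : a = j <;> simp [h2]
  · rw [Matrix.diagonal_apply_ne _ h, Matrix.one_apply_ne h]

lemma flipMat_mulVec (j : Fin p) (v : Fin p → ℝ) :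
    flipMat j *ᵥ v = fun k => if k = j then -v k else v k := by
  funext k
  rw [flipMat, Matrix.mulVec_diagonal]
  by_cases h : k = j <;> simp [h]

/-- permutation matrix -/
noncomputable def permMat (σ : Equiv.Perm (Fin p)) : Matrix (Fin p) (Fin p) ℝ :=
  Matrix.of fun i k => if σ i = k then 1 else 0

lemma permMat_mulVec (σ : Equiv.Perm (Fin p)) (v : Fin p → ℝ) :
    permMat σ *ᵥ v = fun i => v (σ i) := by
  funext i
  show ∑ k, (if σ i = k then (1:ℝ) else 0) * v k = v (σ i)
  rw [Finset.sum_eq_single (σ i)]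
  · simp
  · intro k _ hk; simp [Ne.symm hk, hk]
  · simp

lemma permMat_mem (σ : Equiv.Perm (Fin p)) : permMat σ ∈ Matrix.orthogonalGroup (Fin p) ℝ := by
  rw [Matrix.mem_unitaryGroup_iff]
  ext a b
  show ∑ k, permMat σ a k * (star (permMat σ)) k b = (1 : Matrix (Fin p) (Fin p) ℝ) a b
  have hs : ∀ k, (star (permMat σ)) k b = permMat σ b k := by
    intro k
    simp [Matrix.star_eq_conjTranspose, Matrix.conjTranspose_apply]
  simp only [hs, permMat, Matrix.of_apply, Matrix.one_apply]
  rcases eq_or_ne a b with h | h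
  · subst h
    rw [if_pos rfl, Finset.sum_eq_single (σ a)] <;> simp +contextual [eq_comm]
  · rw [if_neg h]
    apply Finset.sum_eq_zero
    intro k _
    have : σ a ≠ σ b := fun hc => h (σ.injective hc)
    by_cases h1 : σ a = k <;> by_cases h2 : σ b = k <;> simp_all

lemma sum_ite_ite (c d : Fin p) (x y : ℝ) :
    (∑ k, (if k = c then x else 0) * (if k = d then y else 0)) = if c = d then x * y else 0 := by
  rcases eq_or_ne c d with h | h
  · subst h
    rw [if_pos rfl, Finset.sum_eq_single c] <;> simp +contextual
  · rw [if_neg h]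
    apply Finset.sum_eq_zero
    intro k _
    by_cases h1 : k = c <;> by_cases h2 : k = d <;> simp_all

lemma sum_two_two {i j : Fin p} (hij : i ≠ j) (α₁ α₂ β₁ β₂ : ℝ) :
    (∑ k, ((if k = i then α₁ else 0) + (if k = j then α₂ else 0)) *
      ((if k = i then β₁ else 0) + (if k = j then β₂ else 0))) = α₁ * β₁ + α₂ * β₂ := by
  have h : ∀ k : Fin p, ((if k = i then α₁ else 0) + (if k = j then α₂ else 0)) *
      ((if k = i then β₁ else 0) + (if k = j then β₂ else 0)) =
      ((if k = i then α₁ else 0) * (if k = i then β₁ else 0) +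
       (if k = i then α₁ else 0) * (if k = j then β₂ else 0)) +
      ((if k = j then α₂ else 0) * (if k = i then β₁ else 0) +
       (if k = j then α₂ else 0) * (if k = j then β₂ else 0)) := fun k => by ring
  rw [Finset.sum_congr rfl fun k _ => h k, Finset.sum_add_distrib, Finset.sum_add_distrib,
    Finset.sum_add_distrib, sum_ite_ite, sum_ite_ite, sum_ite_ite, sum_ite_ite]
  simp [hij, hij.symm]

lemma sum_one_two {c i j : Fin p} (x β₁ β₂ : ℝ) :
    (∑ k, (if k = c then x else 0) *
      ((if k = i then β₁ else 0) + (if k = j then β₂ else 0))) =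
      (if c = i then x * β₁ else 0) + (if c = j then x * β₂ else 0) := by
  have h : ∀ k : Fin p, (if k = c then x else 0) *
      ((if k = i then β₁ else 0) + (if k = j then β₂ else 0)) =
      (if k = c then x else 0) * (if k = i then β₁ else 0) +
      (if k = c then x else 0) * (if k = j then β₂ else 0) := fun k => by ring
  rw [Finset.sum_congr rfl fun k _ => h k, Finset.sum_add_distrib, sum_ite_ite, sum_ite_ite]

lemma sum_two_one {c i j : Fin p} (x β₁ β₂ : ℝ) :
    (∑ k, ((if k = i then β₁ else 0) + (if k = j then β₂ else 0)) *
      (if k = c then x else 0)) =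
      (if i = c then β₁ * x else 0) + (if j = c then β₂ * x else 0) := by
  have h : ∀ k : Fin p, ((if k = i then β₁ else 0) + (if k = j then β₂ else 0)) *
      (if k = c then x else 0) =
      (if k = i then β₁ else 0) * (if k = c then x else 0) +
      (if k = j then β₂ else 0) * (if k = c then x else 0) := fun k => by ring
  rw [Finset.sum_congr rfl fun k _ => h k, Finset.sum_add_distrib, sum_ite_ite, sum_ite_ite]

/-- rotation by 45 degrees in the (i,j)-plane -/
noncomputable def rotMat (i j : Fin p) : Matrix (Fin p) (Fin p) ℝ :=
  Matrix.of fun a k =>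
    if a = i then (if k = i then invSqrt2 else 0) + (if k = j then invSqrt2 else 0)
    else if a = j then (if k = i then invSqrt2 else 0) + (if k = j then -invSqrt2 else 0)
    else (if k = a then 1 else 0)

lemma rotMat_mulVec {i j : Fin p} (hij : i ≠ j) (v : Fin p → ℝ) (a : Fin p) :
    (rotMat i j *ᵥ v) a =
      if a = i then invSqrt2 * v i + invSqrt2 * v j
      else if a = j then invSqrt2 * v i - invSqrt2 * v j
      else v a := by
  show (∑ k, rotMat i j a k * v k) = _
  by_cases ha : a = i
  · rw [if_pos ha]
    have hrow : ∀ k, rotMat i j a k * v k =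
        (if k = i then invSqrt2 * v k else 0) + (if k = j then invSqrt2 * v k else 0) := by
      intro k
      simp only [rotMat, Matrix.of_apply, if_pos ha, add_mul, ite_mul, zero_mul]
    rw [Finset.sum_congr rfl fun k _ => hrow k, Finset.sum_add_distrib,
      Finset.sum_ite_eq' Finset.univ i (fun k => invSqrt2 * v k),
      Finset.sum_ite_eq' Finset.univ j (fun k => invSqrt2 * v k)]
    simp
  · rw [if_neg ha]
    by_cases hb : a = j
    · rw [if_pos hb]
      have hrow : ∀ k, rotMat i j a k * v k =
          (if k = i then invSqrt2 * v k else 0) + (if k = j then -(invSqrt2 * v k) else 0) := by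
        intro k
        simp only [rotMat, Matrix.of_apply, if_neg ha, if_pos hb, add_mul, ite_mul, zero_mul,
          neg_mul]
      rw [Finset.sum_congr rfl fun k _ => hrow k, Finset.sum_add_distrib,
        Finset.sum_ite_eq' Finset.univ i (fun k => invSqrt2 * v k),
        Finset.sum_ite_eq' Finset.univ j (fun k => -(invSqrt2 * v k))]
      simp [sub_eq_add_neg]
    · rw [if_neg hb]
      have hrow : ∀ k, rotMat i j a k * v k = (if k = a then v k else 0) := by
        intro k
        simp only [rotMat, Matrix.of_apply, if_neg ha, if_neg hb, ite_mul, one_mul, zero_mul]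
      rw [Finset.sum_congr rfl fun k _ => hrow k, Finset.sum_ite_eq' Finset.univ a v]
      simp

lemma rotMat_mem {i j : Fin p} (hij : i ≠ j) :
    rotMat i j ∈ Matrix.orthogonalGroup (Fin p) ℝ := by
  rw [Matrix.mem_unitaryGroup_iff]
  ext a b
  show (∑ k, rotMat i j a k * (star (rotMat i j)) k b) = (1 : Matrix (Fin p) (Fin p) ℝ) a b
  have hs : ∀ k, (star (rotMat i j)) k b = rotMat i j b k := by
    intro k
    simp [Matrix.star_eq_conjTranspose, Matrix.conjTranspose_apply]
  simp only [hs]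
  rw [Matrix.one_apply]
  by_cases ha1 : a = i <;> by_cases hb1 : b = i
  · -- a = i, b = i
    subst ha1; subst hb1
    simp only [rotMat, Matrix.of_apply, eq_self_iff_true, if_true]
    rw [sum_two_two hij]
    simp [invSqrt2_sq]; norm_num [invSqrt2_sq]
  · -- a = i, b ≠ i
    subst ha1
    by_cases hb2 : b = j
    · subst hb2
      simp only [rotMat, Matrix.of_apply, eq_self_iff_true, if_true, if_neg hb1]
      rw [sum_two_two hij]
      simp [hij, mul_neg, invSqrt2_sq]
    · simp only [rotMat, Matrix.of_apply, eq_self_iff_true, if_true, if_neg hb1, if_neg hb2]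
      rw [sum_two_one]
      simp [Ne.symm hb1, Ne.symm hb2]
  · -- a ≠ i, b = i
    subst hb1
    by_cases ha2 : a = j
    · subst ha2
      simp only [rotMat, Matrix.of_apply, if_neg ha1, eq_self_iff_true, if_true]
      rw [sum_two_two hij]
      simp [Ne.symm ha1, mul_neg, invSqrt2_sq]
    · simp only [rotMat, Matrix.of_apply, if_neg ha1, if_neg ha2, eq_self_iff_true, if_true]
      rw [sum_one_two]
      simp [ha1, ha2]
  · by_cases ha2 : a = j <;> by_cases hb2 : b = j
    · subst ha2; subst hb2
      simp only [rotMat, Matrix.of_apply, if_neg ha1, eq_self_iff_true, if_true]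
      rw [sum_two_two hij]
      simp [invSqrt2_sq]; norm_num [invSqrt2_sq]
    · subst ha2
      simp only [rotMat, Matrix.of_apply, if_neg ha1, if_neg hb1, if_neg hb2, eq_self_iff_true, if_true]
      rw [sum_two_one]
      simp [Ne.symm hb1, Ne.symm hb2, hij.symm]
    · subst hb2
      simp only [rotMat, Matrix.of_apply, if_neg ha1, if_neg ha2, if_neg hb1, eq_self_iff_true, if_true]
      rw [sum_one_two]
      simp [ha1, ha2]
    · simp only [rotMat, Matrix.of_apply, if_neg ha1, if_neg ha2, if_neg hb1, if_neg hb2]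
      rw [sum_ite_ite]
      simp [eq_comm]


lemma abs_mono {a b : ℝ} (ha : |a| ≤ 1) (hb : |b| ≤ 1) (m n : ℕ) : |a ^ m * b ^ n| ≤ 1 := by
  rw [abs_mul, abs_pow, abs_pow]
  have h1 : |a| ^ m ≤ 1 := pow_le_one₀ (abs_nonneg a) ha
  have h2 : |b| ^ n ≤ 1 := pow_le_one₀ (abs_nonneg b) hb
  have h3 : (0:ℝ) ≤ |a| ^ m := pow_nonneg (abs_nonneg a) m
  nlinarith [pow_nonneg (abs_nonneg b) n]

lemma sphere_ae (hμ : IsUniformOnSphere μ) : ∀ᵐ v ∂μ, ∀ k, |v k| ≤ 1 := by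
  filter_upwards [hμ.2.1] with v hv k
  have h1 : ∑ i, v i * v i = 1 := hv
  have h2 : v k * v k ≤ 1 := by
    rw [← h1]
    exact Finset.single_le_sum (f := fun i => v i * v i)
      (fun i _ => mul_self_nonneg _) (Finset.mem_univ k)
  exact abs_le_one_iff_mul_self_le_one.2 h2

lemma integrable_bdd (hμ : IsUniformOnSphere μ) {f : (Fin p → ℝ) → ℝ} (hf : Measurable f)
    {C : ℝ} (hC : ∀ v, (∀ k, |v k| ≤ 1) → |f v| ≤ C) : Integrable f μ := by
  haveI := hμ.1
  apply Integrable.mono' (integrable_const C) hf.aestronglyMeasurable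
  filter_upwards [sphere_ae hμ] with v hv
  simpa using hC v hv


lemma transfer (hμ : IsUniformOnSphere μ) {f : (Fin p → ℝ) → ℝ} (hf : Measurable f)
    {Q : Matrix (Fin p) (Fin p) ℝ} (hQ : Q ∈ Matrix.orthogonalGroup (Fin p) ℝ) :
    ∫ v, f v ∂μ = ∫ v, f (Q *ᵥ v) ∂μ := by
  calc ∫ v, f v ∂μ = ∫ v, f v ∂(μ.map (fun x => Q *ᵥ x)) := by rw [hμ.2.2 Q hQ]
    _ = ∫ v, f (Q *ᵥ v) ∂μ := integral_map (measurable_mulVec Q).aemeasurable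
        (by rw [hμ.2.2 Q hQ]; exact hf.aestronglyMeasurable)

lemma meas_mono (i j : Fin p) (m n : ℕ) :
    Measurable fun v : Fin p → ℝ => v i ^ m * v j ^ n :=
  ((measurable_pi_apply i).pow_const m).mul ((measurable_pi_apply j).pow_const n)

lemma int_mono (hμ : IsUniformOnSphere μ) (i j : Fin p) (m n : ℕ) :
    Integrable (fun v : Fin p → ℝ => v i ^ m * v j ^ n) μ :=
  integrable_bdd hμ (meas_mono i j m n) (fun v hv => abs_mono (hv i) (hv j) m n)



lemma m2_perm (hμ : IsUniformOnSphere μ) (σ : Equiv.Perm (Fin p)) (i : Fin p) :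
    ∫ v, v i ^ 2 ∂μ = ∫ v, v (σ i) ^ 2 ∂μ := by
  have ht := transfer hμ (f := fun v => v i ^ 2) ((measurable_pi_apply i).pow_const 2)
    (permMat_mem σ)
  rw [ht]
  simp only [permMat_mulVec]

lemma m4_perm (hμ : IsUniformOnSphere μ) (σ : Equiv.Perm (Fin p)) (i j : Fin p) :
    ∫ v, v i ^ 2 * v j ^ 2 ∂μ = ∫ v, v (σ i) ^ 2 * v (σ j) ^ 2 ∂μ := by
  have ht := transfer hμ (f := fun v => v i ^ 2 * v j ^ 2) (meas_mono i j 2 2)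
    (permMat_mem σ)
  rw [ht]
  simp only [permMat_mulVec]

lemma sum_m2 (hμ : IsUniformOnSphere μ) : ∑ i, ∫ v, (v i : ℝ) ^ 2 ∂μ = 1 := by
  haveI := hμ.1
  rw [← integral_finset_sum Finset.univ (fun i _ => by simpa using int_mono hμ i i 2 0)]
  have h : (fun v : Fin p → ℝ => ∑ i, v i ^ 2) =ᵐ[μ] fun _ => 1 := by
    filter_upwards [hμ.2.1] with v hv
    have h1 : ∑ i, v i * v i = 1 := hv
    rw [← h1]
    exact Finset.sum_congr rfl fun i _ => sq (v i)
  rw [integral_congr_ae h]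
  simp

lemma m2_eq (hμ : IsUniformOnSphere μ) (i : Fin p) : ∫ v, (v i : ℝ) ^ 2 ∂μ = 1 / p := by
  have hall : ∀ j : Fin p, ∫ v, (v j : ℝ) ^ 2 ∂μ = ∫ v, v i ^ 2 ∂μ := fun j => by
    have := m2_perm hμ (Equiv.swap j i) j
    rwa [Equiv.swap_apply_left] at this
  have hsum := sum_m2 hμ
  rw [Finset.sum_congr rfl (fun j _ => hall j), Finset.sum_const, Finset.card_univ,
    Fintype.card_fin, nsmul_eq_mul] at hsum
  have hp : (p : ℝ) ≠ 0 := Nat.cast_ne_zero.2 i.pos.ne'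
  field_simp at hsum ⊢
  linarith

lemma odd3 (hμ : IsUniformOnSphere μ) {i j : Fin p} (hij : i ≠ j) :
    ∫ v, (v i : ℝ) ^ 3 * v j ∂μ = 0 := by
  have ht := transfer hμ (f := fun v => v i ^ 3 * v j)
    (by simpa using meas_mono i j 3 1) (flipMat_mem j)
  simp only [flipMat_mulVec] at ht
  simp only [if_neg hij, eq_self_iff_true, if_true] at ht
  have h2 : ∫ v, (v i : ℝ) ^ 3 * -(v j) ∂μ = - ∫ v, (v i : ℝ) ^ 3 * v j ∂μ := by
    rw [← integral_neg]
    congr 1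
    funext v
    ring
  rw [h2] at ht
  linarith

lemma sum_m4 (hμ : IsUniformOnSphere μ) :
    ∑ i, ∑ j, ∫ v, (v i : ℝ) ^ 2 * v j ^ 2 ∂μ = 1 := by
  haveI := hμ.1
  have hin : ∀ i : Fin p, Integrable (fun v : Fin p → ℝ => ∑ j, v i ^ 2 * v j ^ 2) μ :=
    fun i => integrable_finset_sum _ fun j _ => int_mono hμ i j 2 2
  have h : (fun v : Fin p → ℝ => ∑ i, ∑ j, v i ^ 2 * v j ^ 2) =ᵐ[μ] fun _ => 1 := by
    filter_upwards [hμ.2.1] with v hv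
    have h1 : ∑ i, v i * v i = 1 := hv
    have h2 : (∑ i, v i ^ 2) = 1 := by
      rw [← h1]; exact Finset.sum_congr rfl fun i _ => sq (v i)
    calc ∑ i, ∑ j, v i ^ 2 * v j ^ 2 = (∑ i, v i ^ 2) * (∑ j, v j ^ 2) := by
          rw [Finset.sum_mul_sum]
      _ = 1 := by rw [h2]; norm_num
  calc ∑ i, ∑ j, ∫ v, (v i : ℝ) ^ 2 * v j ^ 2 ∂μ
      = ∑ i, ∫ v, ∑ j, (v i : ℝ) ^ 2 * v j ^ 2 ∂μ :=
        Finset.sum_congr rfl fun i _ =>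
          (integral_finset_sum Finset.univ (fun j _ => int_mono hμ i j 2 2)).symm
    _ = ∫ v, ∑ i, ∑ j, (v i : ℝ) ^ 2 * v j ^ 2 ∂μ :=
        (integral_finset_sum Finset.univ (fun i _ => hin i)).symm
    _ = 1 := by rw [integral_congr_ae h]; simp

lemma rot_identity (hμ : IsUniformOnSphere μ) {i j : Fin p} (hij : i ≠ j) :
    ∫ v, (v i : ℝ) ^ 2 * v i ^ 2 ∂μ = 3 * ∫ v, (v i : ℝ) ^ 2 * v j ^ 2 ∂μ := by
  haveI := hμ.1
  have ht := transfer hμ (f := fun v => v i ^ 2 * v i ^ 2) (meas_mono i i 2 2)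
    (rotMat_mem hij)
  set s := invSqrt2 with hs
  have hs2 : s ^ 2 = 1/2 := by rw [sq]; exact invSqrt2_sq
  have e1 : ∀ v : Fin p → ℝ, ((rotMat i j *ᵥ v) i) ^ 2 * ((rotMat i j *ᵥ v) i) ^ 2 =
      (1/4) * (v i ^ 2 * v i ^ 2) + ((v i ^ 3 * v j) + ((3/2) * (v i ^ 2 * v j ^ 2) +
        ((v j ^ 3 * v i) + (1/4) * (v j ^ 2 * v j ^ 2)))) := by
    intro v
    rw [rotMat_mulVec hij, if_pos rfl]
    have : (s * v i + s * v j) ^ 2 * (s * v i + s * v j) ^ 2 =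
        (s ^ 2) * (s ^ 2) * ((v i + v j) ^ 2 * (v i + v j) ^ 2) := by ring
    rw [this, hs2]
    ring
  have ht2 : ∫ v, (v i : ℝ) ^ 2 * v i ^ 2 ∂μ =
      ∫ v, ((1/4) * (v i ^ 2 * v i ^ 2) + ((v i ^ 3 * v j) + ((3/2) * (v i ^ 2 * v j ^ 2) +
        ((v j ^ 3 * v i) + (1/4) * (v j ^ 2 * v j ^ 2))))) ∂μ := by
    rw [ht]
    exact integral_congr_ae (Filter.Eventually.of_forall fun v => e1 v)
  have i1 : Integrable (fun v : Fin p → ℝ => (1/4 : ℝ) * (v i ^ 2 * v i ^ 2)) μ :=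
    (int_mono hμ i i 2 2).const_mul _
  have i2 : Integrable (fun v : Fin p → ℝ => v i ^ 3 * v j) μ := by
    simpa using int_mono hμ i j 3 1
  have i3 : Integrable (fun v : Fin p → ℝ => (3/2 : ℝ) * (v i ^ 2 * v j ^ 2)) μ :=
    (int_mono hμ i j 2 2).const_mul _
  have i4 : Integrable (fun v : Fin p → ℝ => v j ^ 3 * v i) μ := by
    simpa using int_mono hμ j i 3 1
  have i5 : Integrable (fun v : Fin p → ℝ => (1/4 : ℝ) * (v j ^ 2 * v j ^ 2)) μ :=
    (int_mono hμ j j 2 2).const_mul _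
  have i45 : Integrable (fun v : Fin p → ℝ =>
      v j ^ 3 * v i + (1/4 : ℝ) * (v j ^ 2 * v j ^ 2)) μ := i4.add i5
  have i345 : Integrable (fun v : Fin p → ℝ =>
      (3/2 : ℝ) * (v i ^ 2 * v j ^ 2) + (v j ^ 3 * v i + (1/4 : ℝ) * (v j ^ 2 * v j ^ 2))) μ :=
    i3.add i45
  have i2345 : Integrable (fun v : Fin p → ℝ =>
      v i ^ 3 * v j + ((3/2 : ℝ) * (v i ^ 2 * v j ^ 2) +
        (v j ^ 3 * v i + (1/4 : ℝ) * (v j ^ 2 * v j ^ 2)))) μ := i2.add i345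
  rw [integral_add i1 i2345, integral_add i2 i345, integral_add i3 i45,
    integral_add i4 i5, integral_const_mul, integral_const_mul,
    integral_const_mul] at ht2
  have hz1 : ∫ v, (v i : ℝ) ^ 3 * v j ∂μ = 0 := odd3 hμ hij
  have hz2 : ∫ v, (v j : ℝ) ^ 3 * v i ∂μ = 0 := odd3 hμ (Ne.symm hij)
  have hswap : ∫ v, (v j : ℝ) ^ 2 * v j ^ 2 ∂μ = ∫ v, (v i : ℝ) ^ 2 * v i ^ 2 ∂μ := by
    have := m4_perm hμ (Equiv.swap j i) j j
    rwa [Equiv.swap_apply_left] at this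
  rw [hz1, hz2, hswap] at ht2
  linarith

lemma m4_eq (hμ : IsUniformOnSphere μ) (i j : Fin p) :
    ∫ v, (v i : ℝ) ^ 2 * v j ^ 2 ∂μ =
      (if i = j then 3 else 1) / (p * (p + 2)) := by
  by_cases hex : ∃ k l : Fin p, k ≠ l
  · obtain ⟨k0, l0, hkl⟩ := hex
    set b := ∫ v, (v k0 : ℝ) ^ 2 * v l0 ^ 2 ∂μ with hb
    have hoff : ∀ k l : Fin p, k ≠ l → ∫ v, (v k : ℝ) ^ 2 * v l ^ 2 ∂μ = b := by
      intro k l hkl'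
      have h1 : (Equiv.swap k k0) k = k0 := Equiv.swap_apply_left _ _
      set σ1 := Equiv.swap k k0 with hσ1
      set l' := σ1 l with hl'
      have hl'k0 : l' ≠ k0 := by
        rw [hl', ← h1]
        exact fun hc => hkl' (σ1.injective hc).symm
      set σ2 := Equiv.swap l' l0 with hσ2
      have h2 : σ2 k0 = k0 := Equiv.swap_apply_of_ne_of_ne (Ne.symm hl'k0) hkl
      have h3 : σ2 l' = l0 := Equiv.swap_apply_left _ _
      have := m4_perm hμ (σ1.trans σ2) k l
      rw [this]
      simp only [Equiv.trans_apply]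
      rw [h1, h2, ← hl', h3]
    have hdiag : ∀ k : Fin p, ∫ v, (v k : ℝ) ^ 2 * v k ^ 2 ∂μ = 3 * b := by
      intro k
      rcases eq_or_ne k k0 with h | h
      · subst h
        rw [rot_identity hμ hkl, hoff k l0 hkl]
      · rw [rot_identity hμ h, hoff k k0 h]
    have hsum := sum_m4 hμ
    have hinner : ∀ k : Fin p,
        ∑ l, ∫ v, (v k : ℝ) ^ 2 * v l ^ 2 ∂μ = 3 * b + (p - 1) * b := by
      intro k
      rw [← Finset.add_sum_erase Finset.univ _ (Finset.mem_univ k)]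
      rw [hdiag k]
      congr 1
      rw [Finset.sum_congr rfl (fun l hl =>
        hoff k l (Ne.symm (Finset.ne_of_mem_erase hl)))]
      rw [Finset.sum_const, Finset.card_erase_of_mem (Finset.mem_univ k),
        Finset.card_univ, Fintype.card_fin, nsmul_eq_mul]
      have hp1 : 1 ≤ p := k.pos
      rw [Nat.cast_sub hp1]
      norm_num
    rw [Finset.sum_congr rfl (fun k _ => hinner k), Finset.sum_const, Finset.card_univ,
      Fintype.card_fin, nsmul_eq_mul] at hsum
    have hp0 : (0:ℝ) < p := by
      exact_mod_cast k0.pos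
    have hb' : b = 1 / (p * (p + 2)) := by
      have h2 : (p : ℝ) * ((p : ℝ) + 2) * b = 1 := by ring_nf; ring_nf at hsum; linarith
      field_simp at h2 ⊢
      linarith
    rcases eq_or_ne i j with h | h
    · subst h
      rw [if_pos rfl, hdiag i, hb']
      ring
    · rw [if_neg h, hoff i j h, hb']
  · push_neg at hex
    have hij : i = j := hex i j
    subst hij
    rw [if_pos rfl]
    have hp1 : p = 1 := by
      have h1 : ∀ k : Fin p, k = i := fun k => hex k i
      have : Fintype.card (Fin p) = 1 := Fintype.card_eq_one_iff.2 ⟨i, fun k => h1 k⟩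
      simpa using this
    subst hp1
    have hsum := sum_m4 hμ
    rw [show (Finset.univ : Finset (Fin 1)) = {i} from Finset.eq_singleton_iff_unique_mem.2
      ⟨Finset.mem_univ i, fun k _ => hex k i⟩] at hsum
    rw [Finset.sum_singleton, Finset.sum_singleton] at hsum
    rw [hsum]
    norm_num

section QForm

lemma q_meas (S : Matrix (Fin p) (Fin p) ℝ) :
    Measurable (fun v : Fin p → ℝ => v ⬝ᵥ S *ᵥ v) := by
  show Measurable fun v : Fin p → ℝ => ∑ i, v i * ∑ j, S i j * v j
  apply Finset.measurable_sum
  intro i _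
  exact (measurable_pi_apply i).mul
    (Finset.measurable_sum _ fun j _ => measurable_const.mul (measurable_pi_apply j))

lemma q_bound (S : Matrix (Fin p) (Fin p) ℝ) (v : Fin p → ℝ) (hv : ∀ k, |v k| ≤ 1) :
    |v ⬝ᵥ S *ᵥ v| ≤ ∑ i, ∑ j, |S i j| := by
  show |∑ i, v i * ∑ j, S i j * v j| ≤ _
  calc |∑ i, v i * ∑ j, S i j * v j| ≤ ∑ i, |v i * ∑ j, S i j * v j| :=
        Finset.abs_sum_le_sum_abs _ _
    _ ≤ ∑ i, ∑ j, |S i j| := by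
        apply Finset.sum_le_sum
        intro i _
        rw [abs_mul]
        calc |v i| * |∑ j, S i j * v j| ≤ 1 * |∑ j, S i j * v j| := by
              apply mul_le_mul_of_nonneg_right (hv i) (abs_nonneg _)
          _ = |∑ j, S i j * v j| := one_mul _
          _ ≤ ∑ j, |S i j * v j| := Finset.abs_sum_le_sum_abs _ _
          _ ≤ ∑ j, |S i j| := by
              apply Finset.sum_le_sum
              intro j _
              rw [abs_mul]
              calc |S i j| * |v j| ≤ |S i j| * 1 :=
                    mul_le_mul_of_nonneg_left (hv j) (abs_nonneg _)
                _ = |S i j| := mul_one _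

variable {S : Matrix (Fin p) (Fin p) ℝ}

lemma q_diag (hS : S.IsHermitian) (v : Fin p → ℝ) :
    ((hS.eigenvectorUnitary : Matrix (Fin p) (Fin p) ℝ) *ᵥ v) ⬝ᵥ
      S *ᵥ ((hS.eigenvectorUnitary : Matrix (Fin p) (Fin p) ℝ) *ᵥ v) =
    ∑ k, hS.eigenvalues k * v k ^ 2 := by
  set U : Matrix (Fin p) (Fin p) ℝ := (hS.eigenvectorUnitary : Matrix (Fin p) (Fin p) ℝ)
  have h1 : star U * S * U = diagonal (RCLike.ofReal ∘ hS.eigenvalues) :=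
    (by have h0 := hS.conjStarAlgAut_star_eigenvectorUnitary
        rw [Unitary.conjStarAlgAut_star_apply] at h0
        exact h0)
  have hstar : star U = Uᵀ := by
    rw [Matrix.star_eq_conjTranspose, Matrix.conjTranspose_eq_transpose_of_trivial]
  calc (U *ᵥ v) ⬝ᵥ S *ᵥ (U *ᵥ v)
      = (U *ᵥ v) ⬝ᵥ (S * U) *ᵥ v := by rw [Matrix.mulVec_mulVec]
    _ = ((S * U) *ᵥ v) ⬝ᵥ (U *ᵥ v) := dotProduct_comm _ _
    _ = (((S * U) *ᵥ v) ᵥ* U) ⬝ᵥ v := Matrix.dotProduct_mulVec _ _ _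
    _ = v ⬝ᵥ (((S * U) *ᵥ v) ᵥ* U) := dotProduct_comm _ _
    _ = v ⬝ᵥ (Uᵀ *ᵥ ((S * U) *ᵥ v)) := by rw [Matrix.mulVec_transpose]
    _ = v ⬝ᵥ ((Uᵀ * (S * U)) *ᵥ v) := by rw [Matrix.mulVec_mulVec]
    _ = v ⬝ᵥ ((star U * S * U) *ᵥ v) := by rw [hstar, Matrix.mul_assoc]
    _ = v ⬝ᵥ (diagonal (RCLike.ofReal ∘ hS.eigenvalues) *ᵥ v) := by rw [h1]
    _ = ∑ k, hS.eigenvalues k * v k ^ 2 := by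
        show ∑ k, v k * (diagonal (RCLike.ofReal ∘ hS.eigenvalues) *ᵥ v) k = _
        apply Finset.sum_congr rfl
        intro k _
        rw [Matrix.mulVec_diagonal]
        simp [RCLike.ofReal_real_eq_id]
        ring

lemma trace_eq_sum_eigen (hS : S.IsHermitian) : S.trace = ∑ k, hS.eigenvalues k := by
  set U : Matrix (Fin p) (Fin p) ℝ := (hS.eigenvectorUnitary : Matrix (Fin p) (Fin p) ℝ)
  have hU'U : star U * U = 1 := Matrix.mem_unitaryGroup_iff'.mp hS.eigenvectorUnitary.2
  conv_lhs => rw [hS.spectral_theorem, Unitary.conjStarAlgAut_apply]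
  rw [Matrix.trace_mul_comm, ← Matrix.mul_assoc, hU'U, Matrix.one_mul, Matrix.trace_diagonal]
  simp [RCLike.ofReal_real_eq_id]

lemma trace_sq_sum_eigen (hS : S.IsHermitian) :
    (S * S).trace = ∑ k, hS.eigenvalues k ^ 2 := by
  set U : Matrix (Fin p) (Fin p) ℝ := (hS.eigenvectorUnitary : Matrix (Fin p) (Fin p) ℝ)
  have hUU : U * star U = 1 := Matrix.mem_unitaryGroup_iff.mp hS.eigenvectorUnitary.2
  have h1 : star U * S * U = diagonal (RCLike.ofReal ∘ hS.eigenvalues) :=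
    (by have h0 := hS.conjStarAlgAut_star_eigenvectorUnitary
        rw [Unitary.conjStarAlgAut_star_apply] at h0
        exact h0)
  have key : (star U * S * U) * (star U * S * U) = star U * (S * (U * star U) * S) * U := by
    noncomm_ring
  have h2 : ((diagonal (RCLike.ofReal ∘ hS.eigenvalues) : Matrix (Fin p) (Fin p) ℝ) *
      (diagonal (RCLike.ofReal ∘ hS.eigenvalues) : Matrix (Fin p) (Fin p) ℝ)).trace
        = (S * S).trace := by
    rw [← h1, key, hUU, Matrix.mul_one, Matrix.trace_mul_cycle, ← Matrix.mul_assoc, hUU,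
      Matrix.one_mul]
  rw [← h2, Matrix.diagonal_mul_diagonal, Matrix.trace_diagonal]
  simp [RCLike.ofReal_real_eq_id]
  exact Finset.sum_congr rfl fun k _ => (sq _).symm

lemma intQ (hμ : IsUniformOnSphere μ) (hS : S.IsHermitian) :
    ∫ v, v ⬝ᵥ S *ᵥ v ∂μ = S.trace / p := by
  haveI := hμ.1
  have ht := transfer hμ (q_meas S) hS.eigenvectorUnitary.2
  rw [ht]
  rw [integral_congr_ae (Filter.Eventually.of_forall fun v => q_diag hS v)]
  rw [integral_finset_sum Finset.univ
    (fun k _ => (by simpa using int_mono hμ k k 2 0 : Integrable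
      (fun v : Fin p → ℝ => v k ^ 2) μ).const_mul _)]
  rw [trace_eq_sum_eigen hS, Finset.sum_div]
  apply Finset.sum_congr rfl
  intro k _
  rw [integral_const_mul, m2_eq hμ k]
  ring

lemma intQ2 (hμ : IsUniformOnSphere μ) (hS : S.IsHermitian) :
    ∫ v, (v ⬝ᵥ S *ᵥ v) ^ 2 ∂μ = (S.trace ^ 2 + 2 * (S * S).trace) / (p * (p + 2)) := by
  haveI := hμ.1
  have ht := transfer hμ (f := fun v => (v ⬝ᵥ S *ᵥ v) ^ 2) ((q_meas S).pow_const 2)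
    hS.eigenvectorUnitary.2
  rw [ht]
  have e1 : ∀ v : Fin p → ℝ,
      (((hS.eigenvectorUnitary : Matrix (Fin p) (Fin p) ℝ) *ᵥ v) ⬝ᵥ
        S *ᵥ ((hS.eigenvectorUnitary : Matrix (Fin p) (Fin p) ℝ) *ᵥ v)) ^ 2 =
      ∑ k, ∑ l, (hS.eigenvalues k * hS.eigenvalues l) * (v k ^ 2 * v l ^ 2) := by
    intro v
    rw [q_diag hS v]
    rw [sq, Finset.sum_mul_sum]
    apply Finset.sum_congr rfl
    intro k _
    apply Finset.sum_congr rfl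
    intro l _
    ring
  rw [integral_congr_ae (Filter.Eventually.of_forall e1)]
  have hint : ∀ k l : Fin p, Integrable
      (fun v : Fin p → ℝ => (hS.eigenvalues k * hS.eigenvalues l) * (v k ^ 2 * v l ^ 2)) μ :=
    fun k l => (int_mono hμ k l 2 2).const_mul _
  rw [integral_finset_sum Finset.univ (fun k _ =>
    integrable_finset_sum Finset.univ fun l _ => hint k l)]
  have h2 : ∀ k : Fin p, ∫ v, (∑ l, (hS.eigenvalues k * hS.eigenvalues l) *
      ((v k:ℝ) ^ 2 * v l ^ 2)) ∂μ = ∑ l, (hS.eigenvalues k * hS.eigenvalues l) *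
      ((if k = l then 3 else 1) / (p * (p + 2))) := by
    intro k
    rw [integral_finset_sum Finset.univ (fun l _ => hint k l)]
    apply Finset.sum_congr rfl
    intro l _
    rw [integral_const_mul, m4_eq hμ k l]
  rw [Finset.sum_congr rfl fun k _ => h2 k]
  have h3 : ∀ k l : Fin p, (hS.eigenvalues k * hS.eigenvalues l) *
      ((if k = l then (3:ℝ) else 1) / (p * (p + 2))) =
      (hS.eigenvalues k * hS.eigenvalues l) * (1 / (p * (p + 2))) +
      (if k = l then (hS.eigenvalues k * hS.eigenvalues l) * (2 / (p * (p + 2))) else 0) := by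
    intro k l
    split_ifs with h
    · ring
    · ring
  rw [Finset.sum_congr rfl fun k _ => Finset.sum_congr rfl fun l _ => h3 k l]
  have h4 : ∀ k : Fin p, ∑ l, ((hS.eigenvalues k * hS.eigenvalues l) * (1 / (p * (p + 2))) +
      (if k = l then (hS.eigenvalues k * hS.eigenvalues l) * (2 / (p * (p + 2))) else 0)) =
      (∑ l, (hS.eigenvalues k * hS.eigenvalues l) * (1 / (p * (p + 2)))) +
      hS.eigenvalues k * hS.eigenvalues k * (2 / (p * (p + 2))) := by
    intro k
    rw [Finset.sum_add_distrib, Finset.sum_ite_eq Finset.univ k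
      (fun l => hS.eigenvalues k * hS.eigenvalues l * (2 / (p * (p + 2))))]
    simp
  rw [Finset.sum_congr rfl fun k _ => h4 k, Finset.sum_add_distrib]
  have h5 : ∑ k : Fin p, (∑ l, (hS.eigenvalues k * hS.eigenvalues l) * (1 / (p * (p + 2)))) =
      (∑ k, hS.eigenvalues k) ^ 2 * (1 / (p * (p + 2))) := by
    rw [sq, Finset.sum_mul_sum, Finset.sum_mul]
    apply Finset.sum_congr rfl
    intro k _
    rw [Finset.sum_mul]
  have h6 : ∑ k : Fin p, hS.eigenvalues k * hS.eigenvalues k * (2 / (p * (p + 2))) =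
      (∑ k, hS.eigenvalues k ^ 2) * (2 / (p * (p + 2))) := by
    rw [Finset.sum_mul]
    apply Finset.sum_congr rfl
    intro k _
    ring
  rw [h5, h6, trace_eq_sum_eigen hS, trace_sq_sum_eigen hS]
  ring

end QForm

lemma sqrt_isHermitian {S : Matrix (Fin p) (Fin p) ℝ} (hS : S.PosSemidef) :
    hS.sqrt.IsHermitian := by
  unfold Matrix.PosSemidef.sqrt
  rw [Matrix.IsHermitian, Matrix.conjTranspose_mul, Matrix.conjTranspose_mul,
    Matrix.diagonal_conjTranspose]
  simp [Matrix.mul_assoc, Matrix.star_eq_conjTranspose]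

lemma sqrt_mul_self' {S : Matrix (Fin p) (Fin p) ℝ} (hS : S.PosSemidef) :
    hS.sqrt * hS.sqrt = S := by
  set U : Matrix (Fin p) (Fin p) ℝ := (hS.1.eigenvectorUnitary : Matrix (Fin p) (Fin p) ℝ)
  have hU'U : star U * U = 1 := Matrix.mem_unitaryGroup_iff'.mp hS.1.eigenvectorUnitary.2
  have hD : (diagonal ((RCLike.ofReal : ℝ → ℝ) ∘ (√·) ∘ hS.1.eigenvalues) : Matrix (Fin p) (Fin p) ℝ) *
      diagonal ((RCLike.ofReal : ℝ → ℝ) ∘ (√·) ∘ hS.1.eigenvalues) = diagonal (RCLike.ofReal ∘ hS.1.eigenvalues) := by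
    rw [Matrix.diagonal_mul_diagonal]
    congr 1
    funext k
    simp [RCLike.ofReal_real_eq_id, Real.mul_self_sqrt (hS.eigenvalues_nonneg k)]
  have key : hS.sqrt * hS.sqrt = U * ((diagonal ((RCLike.ofReal : ℝ → ℝ) ∘ (√·) ∘ hS.1.eigenvalues) *
      diagonal ((RCLike.ofReal : ℝ → ℝ) ∘ (√·) ∘ hS.1.eigenvalues))) * star U := by
    unfold Matrix.PosSemidef.sqrt
    calc _ = U * diagonal ((RCLike.ofReal : ℝ → ℝ) ∘ (√·) ∘ hS.1.eigenvalues) * (star U * U) *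
          diagonal ((RCLike.ofReal : ℝ → ℝ) ∘ (√·) ∘ hS.1.eigenvalues) * star U := by
            simp only [U, Matrix.mul_assoc]
      _ = _ := by rw [hU'U, Matrix.mul_one, Matrix.mul_assoc U]
  rw [key, hD]
  conv_rhs => rw [hS.1.spectral_theorem, Unitary.conjStarAlgAut_apply]

end EEV

open EEV in
/-- Estimating equation for ς² = Var(ξ²) in the elliptical model:
ς² = p(p+2)·[Var(‖x‖²) − 2tr(Σ²)]/[tr(Σ)² + 2tr(Σ²)] + 2p. -/
theorem estimating_equation_variance {Ω : Type*} [MeasurableSpace Ω]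
    (P : Measure Ω) [IsProbabilityMeasure P] (p : ℕ) (hp : 0 < p)
    (ξ : Ω → ℝ) (u : Ω → Fin p → ℝ)
    (hξm : Measurable ξ) (hum : Measurable u)
    (hξ0 : ∀ ω, 0 ≤ ξ ω)
    (hξ2 : ∫ ω, (ξ ω) ^ 2 ∂P = (p : ℝ))
    (hξ4 : Integrable (fun ω => (ξ ω) ^ 4) P)
    (hu : IsUniformOnSphere (P.map u))
    (hindep : IndepFun ξ u P)
    (S : Matrix (Fin p) (Fin p) ℝ) (hS : S.PosSemidef) (hSne : S ≠ 0)
    (x : Ω → Fin p → ℝ) (hx : ∀ ω, x ω = ξ ω • (hS.sqrt.mulVec (u ω))) :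
    variance (fun ω => (ξ ω) ^ 2) P =
      (p : ℝ) * ((p : ℝ) + 2) *
        ((variance (fun ω => dotProduct (x ω) (x ω)) P - 2 * (S * S).trace) /
          (S.trace ^ 2 + 2 * (S * S).trace)) + 2 * (p : ℝ) := by
  have hherm : S.IsHermitian := hS.1
  have hp0 : ((p : ℝ)) ≠ 0 := Nat.cast_ne_zero.2 hp.ne'
  have hp2 : ((p : ℝ)) + 2 ≠ 0 := by positivity
  set q : (Fin p → ℝ) → ℝ := fun v => v ⬝ᵥ S *ᵥ v with hqdef
  have hqm : Measurable q := q_meas S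
  set C : ℝ := ∑ i, ∑ j, |S i j| with hCdef
  have hC0 : 0 ≤ C :=
    Finset.sum_nonneg fun i _ => Finset.sum_nonneg fun j _ => abs_nonneg _
  -- pointwise identity for ‖x‖²
  have hxq : ∀ ω, dotProduct (x ω) (x ω) = (ξ ω) ^ 2 * q (u ω) := by
    intro ω
    rw [hx ω]
    have h1 : ∀ (c : ℝ) (w : Fin p → ℝ),
        dotProduct (c • w) (c • w) = c ^ 2 * dotProduct w w := by
      intro c w
      rw [smul_dotProduct, dotProduct_smul, smul_eq_mul, smul_eq_mul]
      ring
    rw [h1]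
    congr 1
    have hA : hS.sqrt.IsHermitian := sqrt_isHermitian hS
    have hAt : hS.sqrt ᵀ = hS.sqrt := by
      rw [← Matrix.conjTranspose_eq_transpose_of_trivial, hA.eq]
    calc dotProduct (hS.sqrt *ᵥ u ω) (hS.sqrt *ᵥ u ω)
        = ((hS.sqrt *ᵥ u ω) ᵥ* hS.sqrt) ⬝ᵥ u ω := Matrix.dotProduct_mulVec _ _ _
      _ = u ω ⬝ᵥ ((hS.sqrt *ᵥ u ω) ᵥ* hS.sqrt) := dotProduct_comm _ _
      _ = u ω ⬝ᵥ (hS.sqrt ᵀ *ᵥ (hS.sqrt *ᵥ u ω)) := by rw [Matrix.mulVec_transpose]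
      _ = u ω ⬝ᵥ ((hS.sqrt ᵀ * hS.sqrt) *ᵥ u ω) := by rw [Matrix.mulVec_mulVec]
      _ = q (u ω) := by rw [hAt, sqrt_mul_self' hS]
  -- a.e. bounds
  have hae : ∀ᵐ ω ∂P, ∀ k, |u ω k| ≤ 1 := ae_of_ae_map hum.aemeasurable (sphere_ae hu)
  have hqub : ∀ᵐ ω ∂P, |q (u ω)| ≤ C := by
    filter_upwards [hae] with ω h using q_bound S (u ω) h
  -- integrability
  have hξ2m : Measurable fun ω => (ξ ω) ^ 2 := hξm.pow_const 2
  have hξ2L2 : MemLp (fun ω => (ξ ω) ^ 2) 2 P := by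
    apply (memLp_two_iff_integrable_sq hξ2m.aestronglyMeasurable).2
    have h : (fun ω => ((ξ ω) ^ 2) ^ 2) = fun ω => (ξ ω) ^ 4 := funext fun ω => by ring
    rw [h]; exact hξ4
  have hξ2int : Integrable (fun ω => (ξ ω) ^ 2) P := hξ2L2.integrable (by norm_num)
  set g : Ω → ℝ := fun ω => (ξ ω) ^ 2 * q (u ω) with hgdef
  have hgm : Measurable g := hξ2m.mul (hqm.comp hum)
  have hg2int : Integrable (fun ω => (g ω) ^ 2) P := by
    apply Integrable.mono' (hξ4.const_mul (C ^ 2)) (hgm.pow_const 2).aestronglyMeasurable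
    filter_upwards [hqub] with ω h
    rw [Real.norm_eq_abs]
    have h1 : (g ω) ^ 2 = (ξ ω) ^ 4 * (q (u ω)) ^ 2 := by rw [hgdef]; ring
    have h2 : (q (u ω)) ^ 2 ≤ C ^ 2 := by
      have := mul_self_le_mul_self (abs_nonneg (q (u ω))) h
      rw [abs_mul_abs_self] at this
      nlinarith
    have h3 : (0:ℝ) ≤ (ξ ω) ^ 4 := by positivity
    rw [abs_of_nonneg (by positivity : (0:ℝ) ≤ (g ω) ^ 2), h1]
    nlinarith
  have hgL2 : MemLp g 2 P := (memLp_two_iff_integrable_sq hgm.aestronglyMeasurable).2 hg2int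
  -- expectations via independence
  have hqu_int : ∫ ω, q (u ω) ∂P = S.trace / p := by
    rw [← integral_map hum.aemeasurable hqm.aestronglyMeasurable]
    exact intQ hu hherm
  have hqu2_int : ∫ ω, (q (u ω)) ^ 2 ∂P = (S.trace ^ 2 + 2 * (S * S).trace) / (p * (p + 2)) := by
    rw [← integral_map hum.aemeasurable (hqm.pow_const 2).aestronglyMeasurable]
    exact intQ2 hu hherm
  have hind2 : IndepFun (fun ω => (ξ ω) ^ 2) (fun ω => q (u ω)) P :=
    hindep.comp (measurable_id.pow_const 2) hqm
  have hEg : ∫ ω, g ω ∂P = S.trace := by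
    have h := hind2.integral_fun_mul_eq_mul_integral hξ2m.aestronglyMeasurable
      (hqm.comp hum).aestronglyMeasurable
    rw [hgdef]
    rw [h, hξ2, hqu_int]
    field_simp
  have hind4 : IndepFun (fun ω => (ξ ω) ^ 4) (fun ω => (q (u ω)) ^ 2) P :=
    hindep.comp (measurable_id.pow_const 4) (hqm.pow_const 2)
  have hEg2 : ∫ ω, (g ω) ^ 2 ∂P =
      (∫ ω, (ξ ω) ^ 4 ∂P) * ((S.trace ^ 2 + 2 * (S * S).trace) / (p * (p + 2))) := by
    have hpt : (fun ω => (g ω) ^ 2) = fun ω => (ξ ω) ^ 4 * (q (u ω)) ^ 2 :=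
      funext fun ω => by rw [hgdef]; ring
    rw [hpt]
    have h := hind4.integral_fun_mul_eq_mul_integral (hξm.pow_const 4).aestronglyMeasurable
      ((hqm.comp hum).pow_const 2).aestronglyMeasurable
    rw [h, hqu2_int]
  -- variances
  have hVξ : variance (fun ω => (ξ ω) ^ 2) P = (∫ ω, (ξ ω) ^ 4 ∂P) - (p : ℝ) ^ 2 := by
    rw [variance_eq_sub hξ2L2]
    have h : (fun ω => (ξ ω) ^ 2) ^ 2 = fun ω => (ξ ω) ^ 4 := funext fun ω => by
      simp [Pi.pow_apply]; ring
    rw [h, hξ2]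
  have hVg : variance (fun ω => dotProduct (x ω) (x ω)) P =
      (∫ ω, (ξ ω) ^ 4 ∂P) * ((S.trace ^ 2 + 2 * (S * S).trace) / (p * (p + 2)))
        - S.trace ^ 2 := by
    have hfg : (fun ω => dotProduct (x ω) (x ω)) = g := funext fun ω => hxq ω
    rw [hfg, variance_eq_sub hgL2]
    have h : g ^ 2 = fun ω => (g ω) ^ 2 := funext fun ω => by simp [Pi.pow_apply]
    rw [h, hEg2, hEg]
  -- positivity of denominator
  have hTnonneg : ∀ k, 0 ≤ hherm.eigenvalues k := fun k => hS.eigenvalues_nonneg k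
  have hQh : 0 ≤ (S * S).trace := by
    rw [trace_sq_sum_eigen hherm]
    exact Finset.sum_nonneg fun k _ => sq_nonneg _
  have hT : S.trace ≠ 0 := by
    intro hT0
    apply hSne
    have hsum : ∑ k, hherm.eigenvalues k = 0 := by rw [← trace_eq_sum_eigen hherm, hT0]
    have hzero : ∀ k ∈ Finset.univ, hherm.eigenvalues k = 0 :=
      (Finset.sum_eq_zero_iff_of_nonneg fun k _ => hTnonneg k).1 hsum
    have hdiag : (diagonal (RCLike.ofReal ∘ hherm.eigenvalues) : Matrix (Fin p) (Fin p) ℝ)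
        = 0 := by
      ext a b
      rcases eq_or_ne a b with h | h
      · subst h
        rw [Matrix.diagonal_apply_eq]
        simp [hzero a (Finset.mem_univ a), RCLike.ofReal_real_eq_id]
      · rw [Matrix.diagonal_apply_ne _ h]
        rfl
    rw [hherm.spectral_theorem, hdiag, map_zero]
  have hden : S.trace ^ 2 + 2 * (S * S).trace ≠ 0 := by
    have : 0 < S.trace ^ 2 := by positivity
    nlinarith
  -- final algebra
  rw [hVξ, hVg]
  field_simp
  ring
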